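/- The coordinate ring ℂ[x,y,z,t]/(x²y + z² + x + t³) of the Koras-Russell cubic threefold is isomorphic as a ℂ-algebra to ℂ[x,y,z,t]/(x²y + (1+x)(z²+x+t³)). -/

import Mathlib

open MvPolynomial

/-- P = x²y + z² + x + t³ -/
noncomputable def KRP : MvPolynomial (Fin 4) ℂ :=
  X 0 ^ 2 * X 1 + X 2 ^ 2 + X 0 + X 3 ^ 3

/-- Q = x²y + (1+x)(z² + x + t³) -/
noncomputable def KRQ : MvPolynomial (Fin 4) ℂ :=
  X 0 ^ 2 * X 1 + (1 + X 0) * (X 2 ^ 2 + X 0 + X 3 ^ 3)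

noncomputable def KRf : Fin 4 → MvPolynomial (Fin 4) ℂ :=
  ![X 0, (1 + X 0) * X 1, X 2, X 3]

noncomputable def KRg : Fin 4 → MvPolynomial (Fin 4) ℂ :=
  ![X 0, (1 - X 0) * X 1 - (X 2 ^ 2 + X 0 + X 3 ^ 3), X 2, X 3]

lemma KRfQ : aeval KRf KRQ = KRP * (1 + X 0) := by
  simp [KRQ, KRP, KRf]
  ring

lemma KRgP : aeval KRg KRP = KRQ * (1 - X 0) := by
  simp [KRQ, KRP, KRg]
  ring

theorem stmt3 :
    Nonempty
      ((MvPolynomial (Fin 4) ℂ ⧸ Ideal.span {KRP}) ≃ₐ[ℂ]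
        (MvPolynomial (Fin 4) ℂ ⧸ Ideal.span {KRQ})) := by
  set R := MvPolynomial (Fin 4) ℂ
  set IP : Ideal R := Ideal.span {KRP}
  set IQ : Ideal R := Ideal.span {KRQ}
  have hG : ∀ a ∈ IP, ((Ideal.Quotient.mkₐ ℂ IQ).comp (aeval KRg)) a = 0 := by
    have hle : IP ≤ RingHom.ker ((Ideal.Quotient.mkₐ ℂ IQ).comp (aeval KRg)).toRingHom := by
      rw [Ideal.span_le, Set.singleton_subset_iff, SetLike.mem_coe, RingHom.mem_ker]
      show Ideal.Quotient.mk IQ (aeval KRg KRP) = 0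
      rw [KRgP, Ideal.Quotient.eq_zero_iff_mem]
      exact Ideal.mul_mem_right _ _ (Ideal.mem_span_singleton_self KRQ)
    exact fun a ha => hle ha
  have hF : ∀ a ∈ IQ, ((Ideal.Quotient.mkₐ ℂ IP).comp (aeval KRf)) a = 0 := by
    have hle : IQ ≤ RingHom.ker ((Ideal.Quotient.mkₐ ℂ IP).comp (aeval KRf)).toRingHom := by
      rw [Ideal.span_le, Set.singleton_subset_iff, SetLike.mem_coe, RingHom.mem_ker]
      show Ideal.Quotient.mk IP (aeval KRf KRQ) = 0
      rw [KRfQ, Ideal.Quotient.eq_zero_iff_mem]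
      exact Ideal.mul_mem_right _ _ (Ideal.mem_span_singleton_self KRP)
    exact fun a ha => hle ha
  set Φ := Ideal.Quotient.liftₐ IP ((Ideal.Quotient.mkₐ ℂ IQ).comp (aeval KRg)) hG
    with hΦ
  set Ψ := Ideal.Quotient.liftₐ IQ ((Ideal.Quotient.mkₐ ℂ IP).comp (aeval KRf)) hF
    with hΨ
  have keyQ : ∀ p : R, (Φ.comp Ψ).comp (Ideal.Quotient.mkₐ ℂ IQ) p =
      Ideal.Quotient.mk IQ (aeval KRg (aeval KRf p)) := by
    intro p
    simp only [hΦ, hΨ, AlgHom.comp_apply, Ideal.Quotient.mkₐ_eq_mk,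
      Ideal.Quotient.liftₐ_apply, Ideal.Quotient.lift_mk, AlgHom.coe_toRingHom]
    rfl
  have keyP : ∀ p : R, (Ψ.comp Φ).comp (Ideal.Quotient.mkₐ ℂ IP) p =
      Ideal.Quotient.mk IP (aeval KRf (aeval KRg p)) := by
    intro p
    simp only [hΦ, hΨ, AlgHom.comp_apply, Ideal.Quotient.mkₐ_eq_mk,
      Ideal.Quotient.liftₐ_apply, Ideal.Quotient.lift_mk, AlgHom.coe_toRingHom]
    rfl
  refine ⟨AlgEquiv.ofAlgHom Φ Ψ ?_ ?_⟩
  · apply Ideal.Quotient.algHom_ext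
    apply MvPolynomial.algHom_ext
    intro i
    rw [keyQ, AlgHom.comp_apply, Ideal.Quotient.mkₐ_eq_mk, AlgHom.id_apply,
      Ideal.Quotient.eq]
    fin_cases i
    · exact Ideal.mem_span_singleton.mpr ⟨0, by simp [KRf, KRg]⟩
    · refine Ideal.mem_span_singleton.mpr ⟨-1, ?_⟩
      simp [KRQ, KRf, KRg]
      ring
    · exact Ideal.mem_span_singleton.mpr ⟨0, by simp [KRf, KRg]⟩
    · exact Ideal.mem_span_singleton.mpr ⟨0, by simp [KRf, KRg]⟩
  · apply Ideal.Quotient.algHom_ext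
    apply MvPolynomial.algHom_ext
    intro i
    rw [keyP, AlgHom.comp_apply, Ideal.Quotient.mkₐ_eq_mk, AlgHom.id_apply,
      Ideal.Quotient.eq]
    fin_cases i
    · exact Ideal.mem_span_singleton.mpr ⟨0, by simp [KRf, KRg]⟩
    · refine Ideal.mem_span_singleton.mpr ⟨-1, ?_⟩
      simp [KRP, KRf, KRg]
      ring
    · exact Ideal.mem_span_singleton.mpr ⟨0, by simp [KRf, KRg]⟩
    · exact Ideal.mem_span_singleton.mpr ⟨0, by simp [KRf, KRg]⟩
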